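/- Let S be a nonempty finite set of positive integers whose greatest common divisor equals 1, α : ℕ → ℝ with α(k) > 0 for every k ∈ S, and β : ℕ → ℝ. Define s : ℝ → ℝ by s(t) = Σ_{k ∈ S} α(k)·cos(2π k t + β(k)). Then s is periodic with period 1 (s(t + 1) = s(t) for all t), and every positive period p of s satisfies p ≥ 1; consequently 1 is the minimal positive period of s. In particular this holds even if 1 ∉ S, i.e., even when the fundamental component is absent. -/

import Mathlib

open Finset Real

lemma intExpAux (n : ℤ) (hn : n ≠ 0) :
    (∫ t in (0:ℝ)..1, Complex.exp (2 * π * Complex.I * (n : ℂ) * t)) = 0 := by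
  have hc : (2 * (π:ℂ) * Complex.I * (n : ℂ)) ≠ 0 := by
    simp [Real.pi_ne_zero, Complex.I_ne_zero, hn, Complex.ofReal_ne_zero]
  rw [integral_exp_mul_complex hc]
  have h1 : (2 * (π:ℂ) * Complex.I * (n : ℂ)) = (n : ℂ) * (2 * π * Complex.I) := by ring
  simp [h1, Complex.exp_int_mul_two_pi_mul_I]

lemma intCos (k k₀ : ℕ) (hk : 0 < k) (hk₀ : 0 < k₀) (φ : ℝ) :
    (∫ t in (0:ℝ)..1,
        ((Real.cos (2 * π * k * t + φ) : ℂ) * Complex.exp (-(2 * π * Complex.I * (k₀:ℂ) * t))))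
      = if k = k₀ then Complex.exp (φ * Complex.I) / 2 else 0 := by
  have key : ∀ t : ℝ, ((Real.cos (2 * π * k * t + φ) : ℂ) *
        Complex.exp (-(2 * π * Complex.I * (k₀:ℂ) * t)))
      = Complex.exp (φ * Complex.I) / 2 *
          Complex.exp (2 * π * Complex.I * (((k:ℤ) - (k₀:ℤ) : ℤ) : ℂ) * t)
        + Complex.exp (-(φ * Complex.I)) / 2 *
          Complex.exp (2 * π * Complex.I * (((-(k:ℤ) - (k₀:ℤ)) : ℤ) : ℂ) * t) := by
    intro t
    rw [Complex.ofReal_cos, Complex.cos]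
    rw [div_mul_eq_mul_div, add_mul, ← Complex.exp_add, ← Complex.exp_add]
    have hu : (((2 * π * (k:ℝ) * t + φ : ℝ) : ℂ) * Complex.I) + (-(2 * π * Complex.I * (k₀:ℂ) * t))
        = (φ * Complex.I + 2 * π * Complex.I * (((k:ℤ) - (k₀:ℤ) : ℤ) : ℂ) * t) := by
      push_cast; ring
    have hv : (-(((2 * π * (k:ℝ) * t + φ : ℝ) : ℂ)) * Complex.I) + (-(2 * π * Complex.I * (k₀:ℂ) * t))
        = (-(φ * Complex.I) + 2 * π * Complex.I * (((-(k:ℤ) - (k₀:ℤ)) : ℤ) : ℂ) * t) := by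
      push_cast; ring
    rw [hu, hv, Complex.exp_add, Complex.exp_add]
    ring
  rw [intervalIntegral.integral_congr (fun t _ => key t)]
  have hInt1 : IntervalIntegrable
      (fun t : ℝ => Complex.exp (φ * Complex.I) / 2 *
        Complex.exp (2 * π * Complex.I * (((k:ℤ) - (k₀:ℤ) : ℤ) : ℂ) * t)) MeasureTheory.volume 0 1 := by
    apply Continuous.intervalIntegrable; fun_prop
  have hInt2 : IntervalIntegrable
      (fun t : ℝ => Complex.exp (-(φ * Complex.I)) / 2 *
        Complex.exp (2 * π * Complex.I * (((-(k:ℤ) - (k₀:ℤ)) : ℤ) : ℂ) * t)) MeasureTheory.volume 0 1 := by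
    apply Continuous.intervalIntegrable; fun_prop
  rw [intervalIntegral.integral_add hInt1 hInt2, intervalIntegral.integral_const_mul,
    intervalIntegral.integral_const_mul]
  have hn2 : (-(k:ℤ) - (k₀:ℤ)) ≠ 0 := by omega
  rw [intExpAux _ hn2, mul_zero, add_zero]
  by_cases h : k = k₀
  · subst h
    simp
  · have hn1 : ((k:ℤ) - (k₀:ℤ)) ≠ 0 := by
      intro hcon; apply h; omega
    rw [intExpAux _ hn1, mul_zero, if_neg h]

lemma finset_gcd_bezout (S : Finset ℕ) : ∃ f : ℕ → ℤ, ∑ k ∈ S, f k * k = ((S.gcd id : ℕ) : ℤ) := by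
  classical
  induction S using Finset.induction_on with
  | empty => exact ⟨0, by simp⟩
  | @insert a S ha ih =>
    obtain ⟨f, hf⟩ := ih
    refine ⟨fun k => if k = a then Nat.gcdA a (S.gcd id) else Nat.gcdB a (S.gcd id) * f k, ?_⟩
    rw [Finset.sum_insert ha, Finset.gcd_insert]
    have hrest : (∑ k ∈ S, (if k = a then Nat.gcdA a (S.gcd id) else Nat.gcdB a (S.gcd id) * f k) * (k:ℤ))
        = Nat.gcdB a (S.gcd id) * ∑ k ∈ S, f k * k := by
      rw [Finset.mul_sum]
      refine Finset.sum_congr rfl fun k hk => ?_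
      rw [if_neg (by rintro rfl; exact ha hk)]; ring
    rw [hrest, hf]
    beta_reduce
    rw [if_pos rfl]
    have hb := Nat.gcd_eq_gcd_ab a (S.gcd id)
    have : GCDMonoid.gcd (id a) (S.gcd id) = Nat.gcd a (S.gcd id) := rfl
    rw [this, hb]
    ring

/-- If the indices of the present harmonics have greatest common divisor `1`, then the
trigonometric polynomial `s(t) = Σ_{k ∈ S} α k · cos(2π k t + β k)` (with strictly positive
coefficients on a nonempty finite set `S` of positive integers) is `1`-periodic and every
positive period is at least `1`; hence `1` is the minimal positive period, even if `1 ∉ S`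
(i.e. even when the fundamental component is absent). -/
theorem minimal_period_one_of_gcd_one
    (S : Finset ℕ) (hS : S.Nonempty) (hSpos : ∀ k ∈ S, 0 < k)
    (hgcd : S.gcd id = 1)
    (α β : ℕ → ℝ) (hα : ∀ k ∈ S, 0 < α k)
    (s : ℝ → ℝ)
    (hs : ∀ t : ℝ, s t = ∑ k ∈ S, α k * Real.cos (2 * Real.pi * (k : ℝ) * t + β k)) :
    (∀ t : ℝ, s (t + 1) = s t) ∧
      (∀ p : ℝ, 0 < p → (∀ t : ℝ, s (t + p) = s t) → 1 ≤ p) := by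
  constructor
  · intro t
    rw [hs, hs]
    refine Finset.sum_congr rfl fun k hk => ?_
    have h1 : 2 * π * (k:ℝ) * (t + 1) + β k = (2 * π * (k:ℝ) * t + β k) + (k:ℤ) * (2 * π) := by
      push_cast; ring
    rw [h1, Real.cos_add_int_mul_two_pi]
  · intro p hp hper
    -- Main step: each harmonic index times p is an integer.
    have hmem : ∀ k₀ ∈ S, ∃ m : ℤ, (k₀:ℝ) * p = m := by
      intro k₀ hk₀S
      have hk₀ : 0 < k₀ := hSpos k₀ hk₀S
      -- the integral of the sum against exp(-2πik₀t), for a general phase choice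
      have hint : ∀ φ' : ℕ → ℝ,
          (∫ t in (0:ℝ)..1, ∑ k ∈ S,
              ((α k : ℂ) * ((Real.cos (2 * π * k * t + φ' k) : ℂ) *
                Complex.exp (-(2 * π * Complex.I * (k₀:ℂ) * t)))))
            = (α k₀ : ℂ) * (Complex.exp (φ' k₀ * Complex.I) / 2) := by
        intro φ'
        rw [intervalIntegral.integral_finset_sum]
        · have heach : ∀ k ∈ S,
              (∫ t in (0:ℝ)..1, ((α k : ℂ) * ((Real.cos (2 * π * k * t + φ' k) : ℂ) *
                Complex.exp (-(2 * π * Complex.I * (k₀:ℂ) * t)))))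
              = if k = k₀ then (α k₀ : ℂ) * (Complex.exp (φ' k₀ * Complex.I) / 2) else 0 := by
            intro k hkS
            rw [intervalIntegral.integral_const_mul, intCos k k₀ (hSpos k hkS) hk₀ (φ' k)]
            by_cases h : k = k₀
            · subst h; simp
            · simp [h]
          rw [Finset.sum_congr rfl heach, Finset.sum_ite_eq' S k₀, if_pos hk₀S]
        · intro k hkS
          apply Continuous.intervalIntegrable
          have : Continuous fun t : ℝ => (Real.cos (2 * π * k * t + φ' k) : ℂ) := by
            fun_prop
          fun_prop
      -- the two integrals are equal because the functions coincide pointwise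
      have heqfun : ∀ t : ℝ,
          (∑ k ∈ S, ((α k : ℂ) * ((Real.cos (2 * π * k * t + (2 * π * k * p + β k)) : ℂ) *
              Complex.exp (-(2 * π * Complex.I * (k₀:ℂ) * t)))))
          = ∑ k ∈ S, ((α k : ℂ) * ((Real.cos (2 * π * k * t + β k) : ℂ) *
              Complex.exp (-(2 * π * Complex.I * (k₀:ℂ) * t)))) := by
        intro t
        have hper' : (∑ k ∈ S, α k * Real.cos (2 * π * k * t + (2 * π * k * p + β k)))
            = ∑ k ∈ S, α k * Real.cos (2 * π * k * t + β k) := by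
          have := hper t
          rw [hs, hs] at this
          rw [← this]
          refine Finset.sum_congr rfl fun k hk => ?_
          congr 1
          congr 1
          ring
        calc (∑ k ∈ S, ((α k : ℂ) * ((Real.cos (2 * π * k * t + (2 * π * k * p + β k)) : ℂ) *
              Complex.exp (-(2 * π * Complex.I * (k₀:ℂ) * t)))))
            = ((∑ k ∈ S, α k * Real.cos (2 * π * k * t + (2 * π * k * p + β k)) : ℝ) : ℂ) *
                Complex.exp (-(2 * π * Complex.I * (k₀:ℂ) * t)) := by
              rw [Complex.ofReal_sum, Finset.sum_mul]
              refine Finset.sum_congr rfl fun k hk => ?_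
              push_cast; ring
          _ = ((∑ k ∈ S, α k * Real.cos (2 * π * k * t + β k) : ℝ) : ℂ) *
                Complex.exp (-(2 * π * Complex.I * (k₀:ℂ) * t)) := by rw [hper']
          _ = ∑ k ∈ S, ((α k : ℂ) * ((Real.cos (2 * π * k * t + β k) : ℂ) *
              Complex.exp (-(2 * π * Complex.I * (k₀:ℂ) * t)))) := by
              rw [Complex.ofReal_sum, Finset.sum_mul]
              refine Finset.sum_congr rfl fun k hk => ?_
              push_cast; ring
      have hI := hint (fun k => 2 * π * k * p + β k)
      rw [intervalIntegral.integral_congr (fun t _ => heqfun t), hint (fun k => β k)] at hI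
      -- cancel α k₀ and /2
      have hαne : ((α k₀ : ℂ)) ≠ 0 := by
        exact_mod_cast (hα k₀ hk₀S).ne'
      have hexp : Complex.exp ((2 * (π:ℂ) * (k₀:ℂ) * (p:ℂ) + ((β k₀ : ℝ) : ℂ)) * Complex.I)
          = Complex.exp ((β k₀ : ℝ) * Complex.I) := by
        have := mul_left_cancel₀ hαne hI
        field_simp at this
        convert this.symm using 2
        push_cast; ring
      have hone : Complex.exp (2 * (π:ℂ) * (k₀:ℂ) * (p:ℂ) * Complex.I) = 1 := by
        have h4 : Complex.exp (2 * (π:ℂ) * (k₀:ℂ) * (p:ℂ) * Complex.I) *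
            Complex.exp ((β k₀ : ℝ) * Complex.I) = Complex.exp ((β k₀ : ℝ) * Complex.I) := by
          rw [← Complex.exp_add, ← hexp]
          congr 1
          push_cast; ring
        have hne : Complex.exp ((β k₀ : ℝ) * Complex.I) ≠ 0 := Complex.exp_ne_zero _
        field_simp at h4
        exact h4
      rw [Complex.exp_eq_one_iff] at hone
      obtain ⟨n, hn⟩ := hone
      refine ⟨n, ?_⟩
      have h2 : 2 * (π:ℂ) * (k₀:ℂ) * (p:ℂ) = (n : ℂ) * (2 * π) :=
        mul_right_cancel₀ Complex.I_ne_zero (hn.trans (by ring))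
      have h3 : (2 * π * k₀ * p : ℝ) = n * (2 * π) := by
        exact_mod_cast h2
      have hπ : (π : ℝ) ≠ 0 := Real.pi_ne_zero
      have : (k₀:ℝ) * p * (2 * π) = (n:ℝ) * (2 * π) := by ring_nf; ring_nf at h3; linarith
      have h2π : (2 * π : ℝ) ≠ 0 := by positivity
      exact mul_right_cancel₀ h2π this
    -- Bezout: p itself is an integer
    obtain ⟨f, hf⟩ := finset_gcd_bezout S
    have hmem' : ∀ k : ℕ, ∃ m : ℤ, k ∈ S → (k:ℝ) * p = m := by
      intro k
      by_cases hk : k ∈ S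
      · obtain ⟨m, hm⟩ := hmem k hk
        exact ⟨m, fun _ => hm⟩
      · exact ⟨0, fun h => absurd h hk⟩
    choose m hm using hmem'
    have hfr : (∑ k ∈ S, (f k : ℝ) * k) = 1 := by
      have := congrArg (fun z : ℤ => (z : ℝ)) hf
      push_cast at this
      rw [this, hgcd]
      norm_num
    have hpM : p = ((∑ k ∈ S, f k * m k : ℤ) : ℝ) := by
      push_cast
      calc p = (∑ k ∈ S, (f k : ℝ) * k) * p := by rw [hfr, one_mul]
        _ = ∑ k ∈ S, (f k : ℝ) * ((k:ℝ) * p) := by rw [Finset.sum_mul]; exact Finset.sum_congr rfl fun k _ => by ring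
        _ = ∑ k ∈ S, (f k : ℝ) * (m k : ℝ) := Finset.sum_congr rfl fun k hk => by rw [hm k hk]
    set M : ℤ := ∑ k ∈ S, f k * m k with hM
    have hMpos : 0 < M := by
      have : (0:ℝ) < (M:ℝ) := by rw [← hpM]; exact hp
      exact_mod_cast this
    have : (1:ℤ) ≤ M := hMpos
    calc (1:ℝ) ≤ (M:ℝ) := by exact_mod_cast this
      _ = p := hpM.symm
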